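/- Let $\kappa, \theta, p$ be as in the LJD positivity assumptions: $\kappa$ has non-positive off-diagonal entries, $\kappa\theta \geq 0$ componentwise, $p = (p_0,\ldots,p_d) \in [0,\infty)^{1+d}$ with $p_1,\ldots,p_k > 0$ and $p_{k+1}=\cdots=p_d=0$, $1 \le k \le d$. Define the linear drift matrix $G_1 = \begin{pmatrix} 0 & 0 \\ \kappa\theta & -\kappa \end{pmatrix}$ acting on $H_1(x) = (1, x_1, \ldots, x_d)^\top$. Then for $\beta \in \mathbb{R}$, $p^\top(\beta\,\mathrm{Id} + G_1)H_1(x) \geq 0$ for all $x \in (0,\infty)^d$ if and only if $\beta \geq \max\{\tilde p^\top\kappa_1/p_1, \ldots, \tilde p^\top\kappa_k/p_k\}$ when $p_0 = 0$, and $\beta \geq \max\{-\tilde p^\top\kappa\theta/p_0,\, \tilde p^\top\kappa_1/p_1, \ldots, \tilde p^\top\kappa_k/p_k\}$ when $p_0 > 0$. -/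

import Mathlib

open scoped Matrix

lemma affine_nonneg_iff {d : ℕ} (A : ℝ) (c : Fin d → ℝ) :
    (∀ x : Fin d → ℝ, (∀ i, 0 < x i) → 0 ≤ A + ∑ j, c j * x j) ↔
    (0 ≤ A ∧ ∀ j, 0 ≤ c j) := by
  constructor
  · intro h
    constructor
    · by_contra hA
      push_neg at hA
      set S := ∑ j : Fin d, c j with hS
      rcases le_or_gt S 0 with hS0 | hS0
      · have h1 := h (fun _ => 1) (fun _ => one_pos)
        simp only [mul_one] at h1
        rw [← hS] at h1
        linarith
      · have hε : (0:ℝ) < -A / (2 * S) := div_pos (by linarith) (by linarith)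
        have h1 := h (fun _ => -A / (2 * S)) (fun _ => hε)
        have h2 : ∑ j : Fin d, c j * (-A / (2 * S)) = S * (-A / (2 * S)) := by
          rw [← Finset.sum_mul]
        rw [h2] at h1
        have h3 : S * (-A / (2 * S)) = -A / 2 := by
          field_simp
        rw [h3] at h1
        linarith
    · intro j
      by_contra hc
      push_neg at hc
      set B : ℝ := ∑ i ∈ Finset.univ.erase j, c i with hB
      set t : ℝ := max 1 ((A + B + 1) / (-c j)) with ht
      have htpos : 0 < t := lt_of_lt_of_le one_pos (le_max_left _ _)
      set x : Fin d → ℝ := Function.update (fun _ => 1) j t with hx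
      have hxpos : ∀ i, 0 < x i := by
        intro i
        by_cases hij : i = j
        · subst hij; simp [hx, htpos]
        · simp [hx, Function.update_of_ne hij]
      have hsum : ∑ i, c i * x i = c j * t + B := by
        rw [← Finset.add_sum_erase _ _ (Finset.mem_univ j)]
        congr 1
        · simp [hx]
        · apply Finset.sum_congr rfl
          intro i hi
          simp [hx, Function.update_of_ne (Finset.ne_of_mem_erase hi)]
      have h1 := h x hxpos
      rw [hsum] at h1
      have h2 : (A + B + 1) / (-c j) ≤ t := le_max_right _ _
      rw [div_le_iff₀ (by linarith : (0:ℝ) < -c j)] at h2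
      nlinarith
  · rintro ⟨hA, hc⟩ x hx
    exact add_nonneg hA (Finset.sum_nonneg fun j _ => mul_nonneg (hc j) (hx j).le)

/-- Proposition 6 of the paper: in the linear jump-diffusion model the
instantaneous dividend rate `D_t = e^{βt} pᵀ(β Id + G₁) H₁(X_t)` is non-negative on the
state space `(0,∞)^d` if and only if `β` exceeds the stated explicit lower bound. Here
`H₁(x) = (1, x₁, …, x_d)ᵀ` and `G₁ = [[0, 0], [κθ, -κ]]`. -/
theorem nonneg_dividend_rate_iff (d k : ℕ) (hk : 0 < k) (hkd : k ≤ d)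
    (κ : Matrix (Fin d) (Fin d) ℝ) (θ : Fin d → ℝ)
    (hκ : ∀ i j : Fin d, i ≠ j → κ i j ≤ 0)
    (hκθ : ∀ i, 0 ≤ κ.mulVec θ i)
    (p : Fin (d + 1) → ℝ) (hp : ∀ i, 0 ≤ p i)
    (hpos : ∀ j : Fin d, (j : ℕ) < k → 0 < p j.succ)
    (hzero : ∀ j : Fin d, k ≤ (j : ℕ) → p j.succ = 0)
    (β : ℝ)
    (G₁ : Matrix (Fin (d + 1)) (Fin (d + 1)) ℝ)
    (hG₁ : G₁ = Matrix.of (Fin.cons (fun _ => (0 : ℝ))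
      (fun i' : Fin d => Fin.cons (κ.mulVec θ i') (fun j' : Fin d => -κ i' j')))) :
    ((∀ x : Fin d → ℝ, (∀ i, 0 < x i) →
        0 ≤ p ⬝ᵥ ((β • (1 : Matrix (Fin (d + 1)) (Fin (d + 1)) ℝ) + G₁).mulVec
          (Fin.cons 1 x))) ↔
      (if p 0 = 0 then
          ((Finset.univ.filter fun j : Fin d => (j : ℕ) < k).sup'
            ⟨⟨0, lt_of_lt_of_le hk hkd⟩, by simp [hk]⟩
            (fun j => (∑ i, p i.succ * κ i j) / p j.succ)) ≤ β
        else
          max (-(∑ i : Fin d, p i.succ * κ.mulVec θ i) / p 0)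
            ((Finset.univ.filter fun j : Fin d => (j : ℕ) < k).sup'
              ⟨⟨0, lt_of_lt_of_le hk hkd⟩, by simp [hk]⟩
              (fun j => (∑ i, p i.succ * κ i j) / p j.succ)) ≤ β)) := by
  set A : ℝ := β * p 0 + ∑ i : Fin d, p i.succ * κ.mulVec θ i with hA
  set c : Fin d → ℝ := fun j => β * p j.succ - ∑ i : Fin d, p i.succ * κ i j with hc
  have hexp : ∀ x : Fin d → ℝ,
      p ⬝ᵥ ((β • (1 : Matrix (Fin (d + 1)) (Fin (d + 1)) ℝ) + G₁).mulVec (Fin.cons 1 x))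
        = A + ∑ j, c j * x j := by
    intro x
    subst hG₁
    rw [Matrix.add_mulVec, Matrix.smul_mulVec, Matrix.one_mulVec,
      dotProduct_add, dotProduct_smul]
    have h1 : p ⬝ᵥ Fin.cons 1 x = p 0 + ∑ i : Fin d, p i.succ * x i := by
      simp [dotProduct, Fin.sum_univ_succ]
    have h2 : p ⬝ᵥ (Matrix.of (Fin.cons (fun _ => (0 : ℝ))
        (fun i' : Fin d => Fin.cons (κ.mulVec θ i') (fun j' : Fin d => -κ i' j')))).mulVec
        (Fin.cons 1 x)
        = ∑ i : Fin d, p i.succ * (κ.mulVec θ i + ∑ j, -κ i j * x j) := by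
      simp [dotProduct, Matrix.mulVec, Fin.sum_univ_succ]
    rw [h1, h2]
    have key2 : (∑ j : Fin d, c j * x j)
        = (∑ j : Fin d, β * p j.succ * x j)
          - ∑ i : Fin d, ∑ j : Fin d, p i.succ * κ i j * x j := by
      rw [Finset.sum_comm, ← Finset.sum_sub_distrib]
      refine Finset.sum_congr rfl fun j _ => ?_
      simp only [hc]
      rw [sub_mul, Finset.sum_mul]
    have key3 : (∑ i : Fin d, p i.succ * (κ.mulVec θ i + ∑ j, -κ i j * x j))
        = (∑ i : Fin d, p i.succ * κ.mulVec θ i)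
          - ∑ i : Fin d, ∑ j : Fin d, p i.succ * κ i j * x j := by
      rw [← Finset.sum_sub_distrib]
      refine Finset.sum_congr rfl fun i _ => ?_
      rw [mul_add, Finset.mul_sum]
      have hn : ∑ j : Fin d, p i.succ * (-κ i j * x j)
          = -∑ j : Fin d, p i.succ * κ i j * x j := by
        rw [← Finset.sum_neg_distrib]
        exact Finset.sum_congr rfl fun j _ => by ring
      rw [hn]; ring
    rw [key3, key2, hA, smul_eq_mul, mul_add, Finset.mul_sum]
    simp only [← mul_assoc]
    ring
  have hmain : (∀ x : Fin d → ℝ, (∀ i, 0 < x i) →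
      0 ≤ p ⬝ᵥ ((β • (1 : Matrix (Fin (d + 1)) (Fin (d + 1)) ℝ) + G₁).mulVec (Fin.cons 1 x)))
      ↔ (0 ≤ A ∧ ∀ j, 0 ≤ c j) := by
    rw [← affine_nonneg_iff A c]
    exact forall_congr' fun x => by rw [hexp x]
  rw [hmain]
  have hcsup : (∀ j, 0 ≤ c j) ↔
      ((Finset.univ.filter fun j : Fin d => (j : ℕ) < k).sup'
        ⟨⟨0, lt_of_lt_of_le hk hkd⟩, by simp [hk]⟩
        (fun j => (∑ i, p i.succ * κ i j) / p j.succ)) ≤ β := by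
    refine Iff.trans ?_ (Finset.sup'_le_iff _ _).symm
    constructor
    · intro h j hj
      rw [Finset.mem_filter] at hj
      have hpj := hpos j hj.2
      rw [div_le_iff₀ hpj]
      have := h j
      rw [hc] at this
      simp only at this
      linarith
    · intro h j
      rcases lt_or_ge (j : ℕ) k with hjk | hjk
      · have := h j (Finset.mem_filter.2 ⟨Finset.mem_univ j, hjk⟩)
        have hpj := hpos j hjk
        rw [div_le_iff₀ hpj] at this
        simp only [hc]
        linarith
      · have hz := hzero j hjk
        have hs : ∑ i : Fin d, p i.succ * κ i j ≤ 0 := by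
          apply Finset.sum_nonpos
          intro i _
          by_cases hij : i = j
          · subst hij; rw [hz]; simp
          · exact mul_nonpos_of_nonneg_of_nonpos (hp i.succ) (hκ i j hij)
        simp only [hc, hz]
        linarith
  by_cases hp0 : p 0 = 0
  · rw [if_pos hp0]
    have hA0 : 0 ≤ A := by
      rw [hA, hp0]
      simp only [mul_zero, zero_add]
      exact Finset.sum_nonneg fun i _ => mul_nonneg (hp i.succ) (hκθ i)
    rw [← hcsup]
    exact ⟨fun h => h.2, fun h => ⟨hA0, h⟩⟩
  · rw [if_neg hp0]
    have hp0' : 0 < p 0 := (hp 0).lt_of_ne (Ne.symm hp0)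
    rw [max_le_iff, ← hcsup]
    have hAiff : 0 ≤ A ↔ -(∑ i : Fin d, p i.succ * κ.mulVec θ i) / p 0 ≤ β := by
      rw [div_le_iff₀ hp0', hA]
      constructor <;> intro <;> linarith
    rw [← hAiff]
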